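/- arXiv:1907.00674 — 3 statements merged into one kernel-verified Lean document; each statement's English description precedes it below -/
import Mathlib

section
/- For every integer i ≥ 1: m_{4i−3,j} = 0 for all 1 ≤ j ≤ i−1; m_{4i−1,j} = 0 for all 1 ≤ j ≤ i−1; and m_{4i,j} = 0 for all 1 ≤ j ≤ i. -/
def m : ℕ → ℕ → ℤ
  | 0, _ => 0
  | _, 0 => 0
  | 1, j => if j = 1 then 3 else 0
  | 2, j => if j = 1 then 2 else if j = 2 then 27 else 0
  | 3, j => if j = 1 then 1 else if j = 2 then 27 else if j = 3 then 243 else 0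
  | i + 4, j + 1 =>
    if i + 4 < j + 1 then 0
    else 9 * m (i + 3) j + 3 * m (i + 2) j + m (i + 1) j

lemma m_zero_of_lt : ∀ n j : ℕ, 3 * j < n → m n j = 0 := by
  intro n
  induction n using Nat.strong_induction_on with
  | _ n ih =>
    intro j h
    match n, j with
    | 0, j => simp [m]
    | 1, 0 => simp [m]
    | 2, 0 => simp [m]
    | 3, 0 => simp [m]
    | 1, j + 1 => omega
    | 2, j + 1 => omega
    | 3, j + 1 => omega
    | n + 4, 0 => simp [m]
    | n + 4, j + 1 =>
      have h1 : m (n + 3) j = 0 := ih (n + 3) (by omega) j (by omega)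
      have h2 : m (n + 2) j = 0 := ih (n + 2) (by omega) j (by omega)
      have h3 : m (n + 1) j = 0 := ih (n + 1) (by omega) j (by omega)
      simp [m, h1, h2, h3]

theorem m_vanishing (i : ℕ) (hi : 1 ≤ i) :
    (∀ j, 1 ≤ j → j ≤ i - 1 → m (4 * i - 3) j = 0) ∧
      (∀ j, 1 ≤ j → j ≤ i - 1 → m (4 * i - 1) j = 0) ∧
      (∀ j, 1 ≤ j → j ≤ i → m (4 * i) j = 0) := by
  refine ⟨fun j h1 h2 => ?_, fun j h1 h2 => ?_, fun j h1 h2 => ?_⟩ <;>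
    exact m_zero_of_lt _ _ (by omega)
end

section
/- For all integers i ≥ 1 and j ≥ 1 with 3j − i − 1 ≥ 0, the integer m_{i,j} is divisible by 3^{3j−i−1}; that is, the 3-adic valuation of m_{i,j} satisfies ν₃(m_{i,j}) ≥ 3j − i − 1 (with the understanding that this holds trivially when m_{i,j} = 0). -/
lemma three_helper (k e c : ℕ) (a : ℤ) (h : (3:ℤ)^e ∣ a) (hk : k ≤ e + c) :
    (3:ℤ)^k ∣ 3^c * a := by
  calc (3:ℤ)^k ∣ 3^(e+c) := pow_dvd_pow 3 hk
    _ = 3^c * 3^e := by ring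
    _ ∣ 3^c * a := mul_dvd_mul_left _ h

lemma key : ∀ i j : ℕ, 1 ≤ i → 1 ≤ j → (3:ℤ) ^ (3 * j - i - 1) ∣ m i j := by
  intro i
  induction i using Nat.strong_induction_on with
  | _ i ih =>
    intro j hi hj
    match i, hi with
    | 1, _ =>
      rw [m]
      split_ifs with h
      · subst h; norm_num
      · exact dvd_zero _
      omega
    | 2, _ =>
      rw [m]
      split_ifs with h h2
      · subst h; norm_num
      · subst h2; norm_num
      · exact dvd_zero _
      omega
    | 3, _ =>
      rw [m]
      split_ifs with h h2 h3
      · subst h; norm_num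
      · subst h2; norm_num
      · subst h3; norm_num
      · exact dvd_zero _
      omega
    | n + 4, _ =>
      match j, hj with
      | 1, _ =>
        have : 3 * 1 - (n + 4) - 1 = 0 := by omega
        rw [this, pow_zero]
        exact one_dvd _
      | j' + 2, _ =>
        rw [m]
        split_ifs with h
        · exact dvd_zero _
        · have h1 := ih (n + 3) (by omega) (j' + 1) (by omega) (by omega)
          have h2 := ih (n + 2) (by omega) (j' + 1) (by omega) (by omega)
          have h3 := ih (n + 1) (by omega) (j' + 1) (by omega) (by omega)
          have d1 : (3:ℤ) ^ (3 * (j' + 2) - (n + 4) - 1) ∣ 9 * m (n + 3) (j' + 1) := by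
            have := three_helper (3 * (j' + 2) - (n + 4) - 1) _ 2 _ h1 (by omega)
            simpa using this
          have d2 : (3:ℤ) ^ (3 * (j' + 2) - (n + 4) - 1) ∣ 3 * m (n + 2) (j' + 1) := by
            have := three_helper (3 * (j' + 2) - (n + 4) - 1) _ 1 _ h2 (by omega)
            simpa using this
          have d3 : (3:ℤ) ^ (3 * (j' + 2) - (n + 4) - 1) ∣ m (n + 1) (j' + 1) := by
            have := three_helper (3 * (j' + 2) - (n + 4) - 1) _ 0 _ h3 (by omega)
            simpa using this
          exact dvd_add (dvd_add d1 d2) d3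

theorem m_valuation (i j : ℕ) (hi : 1 ≤ i) (hj : 1 ≤ j)
    (hij : i + 1 ≤ 3 * j) :
    (3 : ℤ) ^ (3 * j - i - 1) ∣ m i j := key i j hi hj
end

section
/- For all integers α ≥ 0 and j ≥ 1: the integer x_{2α,j} is divisible by 3^{α+3j−4} whenever α + 3j − 4 ≥ 0, and the integer x_{2α+1,j} is divisible by 3^{α+3j−2}; that is, ν₃(x_{2α,j}) ≥ α + 3j − 4 and ν₃(x_{2α+1,j}) ≥ α + 1 + 3(j−1). -/
def a (i j : ℕ) : ℤ := m (4 * i - 3) (i + j - 1)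

def b (i j : ℕ) : ℤ := m (4 * i - 1) (i + j - 1)

def x : ℕ → ℕ → ℤ
  | 0, i => if i = 1 then 1 else 0
  | α + 1, j =>
    ∑ i ∈ Finset.Icc 1 (3 ^ α), x α i * (if α % 2 = 0 then a i j else b i j)

lemma cancel3 {c d k : ℕ} {z : ℤ} (h : (3:ℤ)^(c+k) ∣ 3^(d+k) * z) :
    (3:ℤ)^c ∣ 3^d * z := by
  have h3 : ((3:ℤ)^k) ≠ 0 := pow_ne_zero _ (by norm_num)
  rw [pow_add, pow_add, mul_comm ((3:ℤ)^c), mul_comm ((3:ℤ)^d), mul_assoc] at h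
  exact (mul_dvd_mul_iff_left h3).mp h

lemma M3 : ∀ i j, (3:ℤ)^(3*j) ∣ 3^(i+1) * m i j := by
  intro i
  induction i using Nat.strong_induction_on with
  | _ i ih =>
  intro j
  match i with
  | 0 => simp [m]
  | 1 =>
    match j with
    | 0 => simp
    | 1 => norm_num [m]
    | (j+2) => simp [m]
  | 2 =>
    match j with
    | 0 => simp
    | 1 => norm_num [m]
    | 2 => norm_num [m]
    | (j+3) => simp [m]
  | 3 =>
    match j with
    | 0 => simp
    | 1 => norm_num [m]
    | 2 => norm_num [m]
    | 3 => norm_num [m]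
    | (j+4) => simp [m]
  | (k+4) =>
    match j with
    | 0 => simp [m]
    | (j+1) =>
      have h1 := ih (k+3) (by omega) j
      have h2 := ih (k+2) (by omega) j
      have h3 := ih (k+1) (by omega) j
      rw [show m (k+4) (j+1) = if k + 4 < j + 1 then 0
          else 9 * m (k + 3) j + 3 * m (k + 2) j + m (k + 1) j from rfl]
      split_ifs with h
      · simp
      · have e : (3:ℤ)^(k+4+1) * (9 * m (k+3) j + 3 * m (k+2) j + m (k+1) j)
            = 3^3 * (3^(k+3+1) * m (k+3) j)
              + (3^3 * (3^(k+2+1) * m (k+2) j) + 3^3 * (3^(k+1+1) * m (k+1) j)) := by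
          ring
        rw [e, show 3*(j+1) = 3 + 3*j from by ring, pow_add]
        exact dvd_add (mul_dvd_mul_left _ h1)
          (dvd_add (mul_dvd_mul_left _ h2) (mul_dvd_mul_left _ h3))

lemma A3 (i j : ℕ) : (3:ℤ)^(3*(j+1)) ∣ 3^((i+1)+1) * a (i+1) (j+1) := by
  have ea : a (i+1) (j+1) = m (4*i+1) (i+j+1) := by
    unfold a; congr 1 <;> omega
  rw [ea]
  apply cancel3 (k := 3*i)
  have e1 : 3*(j+1) + 3*i = 3*(i+j+1) := by ring
  have e2 : (i+1)+1 + 3*i = (4*i+1)+1 := by ring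
  rw [e1, e2]
  exact M3 (4*i+1) (i+j+1)

lemma B3 (i j : ℕ) : (3:ℤ)^(3*(j+1)) ∣ 3^((i+1)+3) * b (i+1) (j+1) := by
  have eb : b (i+1) (j+1) = m (4*i+3) (i+j+1) := by
    unfold b; congr 1 <;> omega
  rw [eb]
  apply cancel3 (k := 3*i)
  have e1 : 3*(j+1) + 3*i = 3*(i+j+1) := by ring
  have e2 : (i+1)+3 + 3*i = (4*i+3)+1 := by ring
  rw [e1, e2]
  exact M3 (4*i+3) (i+j+1)

lemma main3 : ∀ α, ((3:ℤ)^α ∣ x (2*α) 1) ∧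
    (∀ j, (3:ℤ)^(α+3*(j+1)) ∣ 3^4 * x (2*α) (j+1)) ∧
    (∀ j, (3:ℤ)^(α+3*(j+1)) ∣ 3^2 * x (2*α+1) (j+1)) := by
  have stepQ : ∀ α, ((3:ℤ)^α ∣ x (2*α) 1) →
      (∀ j, (3:ℤ)^(α+3*(j+1)) ∣ 3^4 * x (2*α) (j+1)) →
      (∀ j, (3:ℤ)^(α+3*(j+1)) ∣ 3^2 * x (2*α+1) (j+1)) := by
    intro α hP1 hP2 j
    have hx : x (2*α+1) (j+1)
        = ∑ i ∈ Finset.Icc 1 (3^(2*α)), x (2*α) i * a i (j+1) := by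
      rw [show x (2*α+1) (j+1) = ∑ i ∈ Finset.Icc 1 (3 ^ (2*α)),
          x (2*α) i * (if (2*α) % 2 = 0 then a i (j+1) else b i (j+1)) from rfl]
      simp [Nat.mul_mod_right]
    rw [hx, Finset.mul_sum]
    apply Finset.dvd_sum
    intro i hi
    rw [Finset.mem_Icc] at hi
    match i, hi.1 with
    | 1, _ =>
      have ha : a 1 (j+1) = m 1 (j+1) := by unfold a; norm_num
      match j with
      | 0 =>
        have ha1 : a 1 1 = 3 := by rw [ha]; rfl
        obtain ⟨c, hc⟩ := hP1
        exact ⟨c, by rw [ha1, hc]; ring⟩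
      | (j+1) =>
        have ha0 : a 1 (j+2) = 0 := by
          rw [ha, show m 1 (j+2) = if j + 2 = 1 then 3 else 0 from rfl]
          simp
        simp [ha0]
    | (i+2), _ =>
      have h1 := hP2 (i+1)
      have h2 := A3 (i+1) j
      apply cancel3 (k := i+5)
      calc (3:ℤ)^((α+3*(j+1))+(i+5))
          ∣ 3^((α+3*(i+1+1)) + 3*(j+1)) := pow_dvd_pow 3 (by omega)
        _ ∣ (3^4 * x (2*α) (i+1+1)) * (3^((i+1+1)+1) * a (i+1+1) (j+1)) := by
            rw [pow_add]; exact mul_dvd_mul h1 h2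
        _ = 3^(2+(i+5)) * (x (2*α) (i+2) * a (i+2) (j+1)) := by ring
  have stepP : ∀ α, (∀ j, (3:ℤ)^(α+3*(j+1)) ∣ 3^2 * x (2*α+1) (j+1)) →
      ((3:ℤ)^(α+1) ∣ x (2*(α+1)) 1) ∧
      (∀ j, (3:ℤ)^((α+1)+3*(j+1)) ∣ 3^4 * x (2*(α+1)) (j+1)) := by
    intro α hQ
    have hx : ∀ j, x (2*(α+1)) j
        = ∑ i ∈ Finset.Icc 1 (3^(2*α+1)), x (2*α+1) i * b i j := by
      intro j
      rw [show x (2*(α+1)) j = ∑ i ∈ Finset.Icc 1 (3 ^ (2*α+1)),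
          x (2*α+1) i * (if (2*α+1) % 2 = 0 then a i j else b i j) from rfl]
      have hmod : (2*α+1) % 2 = 1 := by omega
      simp [hmod]
    have hxq : ∀ i, (3:ℤ)^(α+3*(i+1) - 2) ∣ x (2*α+1) (i+1) := by
      intro i
      have h := hQ i
      have := cancel3 (c := α+3*(i+1)-2) (d := 0) (k := 2) (z := x (2*α+1) (i+1))
        (by rw [show α+3*(i+1)-2+2 = α+3*(i+1) from by omega]; simpa using h)
      simpa using this
    constructor
    · rw [hx 1]
      apply Finset.dvd_sum
      intro i hi
      rw [Finset.mem_Icc] at hi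
      match i, hi.1 with
      | (i+1), _ =>
        apply dvd_mul_of_dvd_left
        exact dvd_trans (pow_dvd_pow 3 (by omega)) (hxq i)
    · intro j
      rw [hx (j+1), Finset.mul_sum]
      apply Finset.dvd_sum
      intro i hi
      rw [Finset.mem_Icc] at hi
      match i, hi.1 with
      | (i+1), _ =>
        have h1 := hQ i
        have h2 := B3 i j
        apply cancel3 (k := i+2)
        calc (3:ℤ)^(((α+1)+3*(j+1))+(i+2))
            ∣ 3^((α+3*(i+1)) + 3*(j+1)) := pow_dvd_pow 3 (by omega)
          _ ∣ (3^2 * x (2*α+1) (i+1)) * (3^((i+1)+3) * b (i+1) (j+1)) := by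
              rw [pow_add]; exact mul_dvd_mul h1 h2
          _ = 3^(4+(i+2)) * (x (2*α+1) (i+1) * b (i+1) (j+1)) := by ring
  intro α
  induction α with
  | zero =>
    have hP1 : (3:ℤ)^0 ∣ x 0 1 := by simp
    have hP2 : ∀ j, (3:ℤ)^(0+3*(j+1)) ∣ 3^4 * x 0 (j+1) := by
      intro j
      match j with
      | 0 => norm_num [x]
      | (j+1) => simp [x]
    exact ⟨by simpa using hP1, by simpa using hP2,
      by simpa using stepQ 0 (by simpa using hP1) (by simpa using hP2)⟩
  | succ α ih =>
    obtain ⟨hP1, hP2, hQ⟩ := ih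
    obtain ⟨hP1', hP2'⟩ := stepP α hQ
    exact ⟨hP1', hP2', stepQ (α+1) hP1' hP2'⟩

theorem x_valuation (α j : ℕ) (hj : 1 ≤ j) :
    (4 ≤ α + 3 * j → (3 : ℤ) ^ (α + 3 * j - 4) ∣ x (2 * α) j) ∧
      (3 : ℤ) ^ (α + 1 + 3 * (j - 1)) ∣ x (2 * α + 1) j := by
  obtain ⟨j, rfl⟩ : ∃ j', j = j'+1 := ⟨j-1, by omega⟩
  obtain ⟨h1, h2, h3⟩ := main3 α
  constructor
  · intro h4
    have h := h2 j
    have h5 := cancel3 (c := α+3*(j+1)-4) (d := 0) (k := 4) (z := x (2*α) (j+1))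
      (by rw [show α+3*(j+1)-4+4 = α+3*(j+1) from by omega]; simpa using h)
    simpa using h5
  · have h := h3 j
    have h5 := cancel3 (c := α+1+3*j) (d := 0) (k := 2) (z := x (2*α+1) (j+1))
      (by rw [show α+1+3*j+2 = α+3*(j+1) from by omega]; simpa using h)
    simpa using h5
end
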